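/- Let Ω be an arbitrary open set in ℝⁿ and let (Ω_k^□)_{k∈ℕ} be its dyadic approximations rooted in a fixed family of cubes (one cube per connected component). Then (Ω_k^□) is a non-decreasing sequence of open subsets of Ω whose union is Ω; in particular the characteristic functions 1_{Ω_k^□} converge pointwise to 1_Ω. -/

import Mathlib

open Set Filter Topology

noncomputable section

/-- The closed dyadic cube of order `k` indexed by `j ∈ ℤⁿ`. -/
def dyadicCube (n k : ℕ) (j : Fin n → ℤ) : Set (EuclideanSpace ℝ (Fin n)) :=
  {x | ∀ m : Fin n, (j m : ℝ) / 2 ^ k ≤ x m ∧ x m ≤ ((j m : ℝ) + 1) / 2 ^ k}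

/-- A set is drawn on the dyadic grid `Π_k` if it is a union of cubes of that grid. -/
def DrawnOn (n k : ℕ) (Q : Set (EuclideanSpace ℝ (Fin n))) : Prop :=
  ∃ 𝒬 : Set (Fin n → ℤ), Q = ⋃ j ∈ 𝒬, dyadicCube n k j

/-- `A` is the maximal set drawn on the dyadic grid of order `k`, rooted in `π₀`,
contained in `C`, with connected interior. -/
def IsMaxDyadicApprox (n k : ℕ) (π₀ C A : Set (EuclideanSpace ℝ (Fin n))) : Prop :=
  DrawnOn n k A ∧ π₀ ⊆ A ∧ A ⊆ C ∧ IsConnected (interior A) ∧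
    ∀ B : Set (EuclideanSpace ℝ (Fin n)),
      DrawnOn n k B → π₀ ⊆ B → B ⊆ C → IsConnected (interior B) → B ⊆ A

set_option maxHeartbeats 1000000

section Aux

variable {n : ℕ}

def cbox (l u : Fin n → ℝ) : Set (EuclideanSpace ℝ (Fin n)) :=
  {x | ∀ m, l m ≤ x m ∧ x m ≤ u m}

def obox (l u : Fin n → ℝ) : Set (EuclideanSpace ℝ (Fin n)) :=
  {x | ∀ m, l m < x m ∧ x m < u m}

lemma dyadicCube_eq_cbox (k : ℕ) (j : Fin n → ℤ) :
    dyadicCube n k j = cbox (fun m => (j m : ℝ) / 2 ^ k) (fun m => ((j m : ℝ) + 1) / 2 ^ k) := rfl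

lemma isOpen_obox (l u : Fin n → ℝ) : IsOpen (obox l u) := by
  have : obox l u = ⋂ m, (fun x : EuclideanSpace ℝ (Fin n) => x m) ⁻¹' Ioo (l m) (u m) := by
    ext x; simp [obox, mem_iInter]
  rw [this]
  exact isOpen_iInter_of_finite fun m => (isOpen_Ioo).preimage (by fun_prop)

lemma convex_cbox (l u : Fin n → ℝ) : Convex ℝ (cbox l u) := by
  intro x hx y hy a b ha hb hab
  intro m
  have h1 := hx m; have h2 := hy m
  have e : (a • x + b • y) m = a * x m + b * y m := by
    rw [PiLp.add_apply, PiLp.smul_apply, PiLp.smul_apply]; rfl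
  rw [e]
  have t1 : a * l m ≤ a * x m := mul_le_mul_of_nonneg_left h1.1 ha
  have t2 : b * l m ≤ b * y m := mul_le_mul_of_nonneg_left h2.1 hb
  have t3 : a * x m ≤ a * u m := mul_le_mul_of_nonneg_left h1.2 ha
  have t4 : b * y m ≤ b * u m := mul_le_mul_of_nonneg_left h2.2 hb
  have e1 : a * l m + b * l m = l m := by rw [← add_mul, hab, one_mul]
  have e2 : a * u m + b * u m = u m := by rw [← add_mul, hab, one_mul]
  constructor <;> linarith

lemma convex_obox (l u : Fin n → ℝ) : Convex ℝ (obox l u) := by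
  intro x hx y hy a b ha hb hab
  intro m
  have h1 := hx m; have h2 := hy m
  have e : (a • x + b • y) m = a * x m + b * y m := by
    rw [PiLp.add_apply, PiLp.smul_apply, PiLp.smul_apply]; rfl
  rw [e]
  have e1 : a * l m + b * l m = l m := by rw [← add_mul, hab, one_mul]
  have e2 : a * u m + b * u m = u m := by rw [← add_mul, hab, one_mul]
  rcases eq_or_lt_of_le ha with ha' | ha'
  · have hb1 : b = 1 := by linarith
    have t2 : b * l m < b * y m := by rw [hb1]; simpa using h2.1
    have t4 : b * y m < b * u m := by rw [hb1]; simpa using h2.2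
    have t1 : a * l m ≤ a * x m := by rw [← ha']; simp
    have t3 : a * x m ≤ a * u m := by rw [← ha']; simp
    constructor <;> linarith
  · have t1 : a * l m < a * x m := by exact (mul_lt_mul_iff_right₀ ha').mpr h1.1
    have t3 : a * x m < a * u m := (mul_lt_mul_iff_right₀ ha').mpr h1.2
    have t2 : b * l m ≤ b * y m := mul_le_mul_of_nonneg_left h2.1.le hb
    have t4 : b * y m ≤ b * u m := mul_le_mul_of_nonneg_left h2.2.le hb
    constructor <;> linarith

lemma obox_nonempty {l u : Fin n → ℝ} (h : ∀ m, l m < u m) : (obox l u).Nonempty := by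
  refine ⟨WithLp.toLp 2 (fun m => (l m + u m) / 2 : Fin n → ℝ), fun m => ?_⟩
  constructor <;> · simp only [PiLp.toLp_apply]; linarith [h m]

lemma obox_subset_cbox (l u : Fin n → ℝ) : obox l u ⊆ cbox l u :=
  fun x hx m => ⟨(hx m).1.le, (hx m).2.le⟩

lemma obox_subset_interior_cbox (l u : Fin n → ℝ) : obox l u ⊆ interior (cbox l u) :=
  interior_maximal (obox_subset_cbox l u) (isOpen_obox l u)

/-- Points of a convex set are in the closure of the interior, given an interior point. -/
lemma mem_closure_interior_of_convex {s : Set (EuclideanSpace ℝ (Fin n))} (hs : Convex ℝ s)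
    {c x : EuclideanSpace ℝ (Fin n)} (hc : c ∈ interior s) (hx : x ∈ s) :
    x ∈ closure (interior s) := by
  set f : ℝ → EuclideanSpace ℝ (Fin n) := fun t => (1 - t) • x + t • c with hf
  have hcont : Continuous f := by
    apply Continuous.add
    · exact (continuous_const.sub continuous_id).smul continuous_const
    · exact continuous_id.smul continuous_const
  have himg : ∀ t ∈ Ioc (0:ℝ) 1, f t ∈ interior s := fun t ht =>
    hs.combo_closure_interior_mem_interior (subset_closure hx) hc (by linarith [ht.2])
      ht.1 (by ring)
  have h0 : f 0 = x := by simp [hf]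
  have h0mem : (0:ℝ) ∈ closure (Ioc (0:ℝ) 1) := by
    rw [closure_Ioc one_ne_zero.symm]; exact ⟨le_refl _, by norm_num⟩
  have : f 0 ∈ closure (f '' Ioc (0:ℝ) 1) :=
    image_closure_subset_closure_image hcont ⟨0, h0mem, rfl⟩
  rw [h0] at this
  refine closure_mono ?_ this
  rintro _ ⟨t, ht, rfl⟩
  exact himg t ht

lemma cbox_subset_closure_interior {l u : Fin n → ℝ} (h : ∀ m, l m < u m) :
    cbox l u ⊆ closure (interior (cbox l u)) := by
  obtain ⟨c, hc⟩ := obox_nonempty h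
  exact fun x hx => mem_closure_interior_of_convex (convex_cbox l u)
    (obox_subset_interior_cbox l u hc) hx


lemma iUnion_cubes_box (k : ℕ) (lo hi : Fin n → ℤ) (hle : ∀ m, lo m ≤ hi m) :
    (⋃ j ∈ {j : Fin n → ℤ | ∀ m, lo m ≤ j m ∧ j m ≤ hi m}, dyadicCube n k j)
      = cbox (fun m => (lo m : ℝ) / 2 ^ k) (fun m => ((hi m : ℝ) + 1) / 2 ^ k) := by
  have h2k : (0:ℝ) < 2 ^ k := by positivity
  ext x
  simp only [mem_iUnion, mem_setOf_eq, exists_prop]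
  constructor
  · rintro ⟨j, hj, hxj⟩ m
    obtain ⟨h1, h2⟩ := hxj m
    obtain ⟨h3, h4⟩ := hj m
    dsimp only
    have h2k' : (0:ℝ) < 2 ^ k := by positivity
    constructor
    · refine le_trans ?_ h1
      have : (lo m : ℝ) ≤ (j m : ℝ) := by exact_mod_cast h3
      gcongr
    · refine le_trans h2 ?_
      have : (j m : ℝ) ≤ (hi m : ℝ) := by exact_mod_cast h4
      gcongr
  · intro hx
    refine ⟨fun m => max (lo m) (min (hi m) ⌊(2:ℝ) ^ k * x m⌋),
      fun m => ⟨le_max_left _ _, max_le (hle m) (min_le_left _ _)⟩, fun m => ?_⟩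
    obtain ⟨hx1, hx2⟩ := hx m
    dsimp only at hx1 hx2 ⊢
    set t := ⌊(2:ℝ) ^ k * x m⌋ with ht
    have hf1 : (t:ℝ) ≤ 2 ^ k * x m := Int.floor_le _
    have hf2 : 2 ^ k * x m < t + 1 := Int.lt_floor_add_one _
    have hlo : (lo m : ℝ) ≤ 2 ^ k * x m := by
      rw [div_le_iff₀ h2k] at hx1; linarith
    have hhi : 2 ^ k * x m ≤ (hi m : ℝ) + 1 := by
      rw [le_div_iff₀ h2k] at hx2; linarith
    rcases lt_or_ge t (lo m) with h1 | h1
    · have hJ : max (lo m) (min (hi m) t) = lo m :=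
        max_eq_left (le_of_lt (lt_of_le_of_lt (min_le_right _ _) h1))
      rw [hJ]
      constructor
      · exact hx1
      · rw [div_le_iff₀ h2k] at hx1
        rw [le_div_iff₀ h2k]
        have : (t:ℝ) + 1 ≤ lo m := by exact_mod_cast h1
        linarith
    · rcases lt_or_ge (hi m) t with h2 | h2
      · have hJ : max (lo m) (min (hi m) t) = hi m := by
          rw [min_eq_left h2.le, max_eq_right (hle m)]
        rw [hJ]
        constructor
        · rw [div_le_iff₀ h2k]
          have : (hi m : ℝ) + 1 ≤ t := by exact_mod_cast h2
          linarith
        · exact hx2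
      · have hJ : max (lo m) (min (hi m) t) = t := by
          rw [min_eq_right h2, max_eq_right h1]
        rw [hJ]
        constructor
        · rw [div_le_iff₀ h2k]; linarith
        · rw [le_div_iff₀ h2k]; linarith

lemma dyadicCube_refine (k : ℕ) (j : Fin n → ℤ) :
    dyadicCube n k j =
      ⋃ j' ∈ {j' : Fin n → ℤ | ∀ m, 2 * j m ≤ j' m ∧ j' m ≤ 2 * j m + 1},
        dyadicCube n (k+1) j' := by
  rw [iUnion_cubes_box (k+1) (fun m => 2 * j m) (fun m => 2 * j m + 1) (fun m => show 2 * j m ≤ 2 * j m + 1 by omega)]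
  have e1 : (fun m => ((2 * j m : ℤ) : ℝ) / 2 ^ (k+1)) = fun m => (j m : ℝ) / 2 ^ k := by
    funext m; push_cast; rw [pow_succ]; field_simp
  have e2 : (fun m => (((2 * j m + 1 : ℤ)) : ℝ) + 1) = fun m => 2 * ((j m : ℝ) + 1) := by
    funext m; push_cast; ring
  unfold dyadicCube cbox
  ext x
  simp only [mem_setOf_eq]
  constructor
  · intro h m
    obtain ⟨h1, h2⟩ := h m
    constructor
    · push_cast
      rw [pow_succ]
      rw [div_le_iff₀ (by positivity)] at h1 ⊢
      linarith
    · push_cast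
      rw [pow_succ]
      rw [le_div_iff₀ (by positivity)] at h2 ⊢
      linarith
  · intro h m
    obtain ⟨h1, h2⟩ := h m
    push_cast at h1 h2
    rw [pow_succ] at h1 h2
    constructor
    · rw [div_le_iff₀ (by positivity)] at h1 ⊢
      linarith
    · rw [le_div_iff₀ (by positivity)] at h2 ⊢
      linarith

lemma DrawnOn.succ {k : ℕ} {Q : Set (EuclideanSpace ℝ (Fin n))} (h : DrawnOn n k Q) :
    DrawnOn n (k+1) Q := by
  obtain ⟨𝒬, rfl⟩ := h
  refine ⟨{j' | ∃ j ∈ 𝒬, ∀ m, 2 * j m ≤ j' m ∧ j' m ≤ 2 * j m + 1}, ?_⟩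
  ext x
  simp only [mem_iUnion, mem_setOf_eq, exists_prop]
  constructor
  · rintro ⟨j, hj, hx⟩
    rw [dyadicCube_refine] at hx
    simp only [mem_iUnion, mem_setOf_eq, exists_prop] at hx
    obtain ⟨j', hj', hx'⟩ := hx
    exact ⟨j', ⟨j, hj, hj'⟩, hx'⟩
  · rintro ⟨j', ⟨j, hj, hbox⟩, hx⟩
    refine ⟨j, hj, ?_⟩
    rw [dyadicCube_refine]
    simp only [mem_iUnion, mem_setOf_eq, exists_prop]
    exact ⟨j', hbox, hx⟩

lemma DrawnOn.mono {k k' : ℕ} {Q : Set (EuclideanSpace ℝ (Fin n))} (hk : k ≤ k')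
    (h : DrawnOn n k Q) : DrawnOn n k' Q := by
  induction k', hk using Nat.le_induction with
  | base => exact h
  | succ k' hk ih => exact ih.succ

lemma DrawnOn.union {k : ℕ} {Q R : Set (EuclideanSpace ℝ (Fin n))} (hQ : DrawnOn n k Q)
    (hR : DrawnOn n k R) : DrawnOn n k (Q ∪ R) := by
  obtain ⟨𝒬, rfl⟩ := hQ
  obtain ⟨ℛ, rfl⟩ := hR
  exact ⟨𝒬 ∪ ℛ, (biUnion_union 𝒬 ℛ _).symm⟩

lemma coord_dist_le (x y : EuclideanSpace ℝ (Fin n)) (m : Fin n) :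
    dist (x m) (y m) ≤ dist x y := by
  rw [EuclideanSpace.dist_eq]
  have h1 : dist (x m) (y m) = Real.sqrt (dist (x m) (y m) ^ 2) :=
    (Real.sqrt_sq dist_nonneg).symm
  rw [h1]
  apply Real.sqrt_le_sqrt
  exact Finset.single_le_sum (f := fun i => dist (x i) (y i) ^ 2) (fun i _ => sq_nonneg _) (Finset.mem_univ m)

lemma dist_le_of_coord {x y : EuclideanSpace ℝ (Fin n)} {c : ℝ} (hc : 0 ≤ c)
    (h : ∀ m, dist (x m) (y m) ≤ c) : dist x y ≤ n * c := by
  rw [EuclideanSpace.dist_eq]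
  have h1 : ∑ i, dist (x i) (y i) ^ 2 ≤ ((n : ℝ) * c) ^ 2 := by
    have h2 : ∑ i, dist (x i) (y i) ^ 2 ≤ ∑ _i : Fin n, c ^ 2 :=
      Finset.sum_le_sum fun i _ => by nlinarith [h i, (dist_nonneg : (0:ℝ) ≤ dist (x i) (y i))]
    have h3 : ∑ _i : Fin n, c ^ 2 = (n : ℝ) * c ^ 2 := by
      rw [Finset.sum_const, Finset.card_univ, Fintype.card_fin]; simp [nsmul_eq_mul]
    have h4 : (n : ℝ) * c ^ 2 ≤ ((n:ℝ) * c) ^ 2 := by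
      have hn : (n : ℝ) ≤ (n : ℝ) ^ 2 := by
        have : n ≤ n ^ 2 := Nat.le_self_pow two_ne_zero n
        exact_mod_cast this
      nlinarith [sq_nonneg c]
    linarith
  calc Real.sqrt (∑ i, dist (x i) (y i) ^ 2) ≤ Real.sqrt (((n:ℝ) * c) ^ 2) :=
        Real.sqrt_le_sqrt h1
    _ = (n:ℝ) * c := Real.sqrt_sq (by positivity)

lemma dyadic_lt (k : ℕ) (j : Fin n → ℤ) (m : Fin n) :
    (j m : ℝ) / 2 ^ k < ((j m : ℝ) + 1) / 2 ^ k := by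
  have h2k : (0:ℝ) < 2 ^ k := by positivity
  rw [div_lt_div_iff₀ h2k h2k]
  nlinarith

/-- Main exhaustion lemma for a single connected component. -/
lemma component_exhaustion (Cm : Set (EuclideanSpace ℝ (Fin n))) (hCo : IsOpen Cm)
    (hCc : IsConnected Cm) (k₀' : ℕ) (π₀j : Fin n → ℤ)
    (A : ℕ → Set (EuclideanSpace ℝ (Fin n)))
    (hA : ∀ k, k₀' ≤ k → IsMaxDyadicApprox n k (dyadicCube n k₀' π₀j) Cm (A k)) :
    Cm ⊆ ⋃ k, ⋃ (_ : k₀' ≤ k), interior (A k) := by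
  classical
  set V := ⋃ k, ⋃ (_ : k₀' ≤ k), interior (A k) with hV
  have hVopen : IsOpen V := isOpen_iUnion fun k => isOpen_iUnion fun _ => isOpen_interior
  have hVsub : V ⊆ Cm := by
    refine iUnion_subset fun k => iUnion_subset fun hk => ?_
    exact interior_subset.trans (hA k hk).2.2.1
  have hAmono : ∀ k k', k₀' ≤ k → k ≤ k' → A k ⊆ A k' := fun k k' h hk =>
    (hA k' (h.trans hk)).2.2.2.2 _ (DrawnOn.mono hk (hA k h).1) (hA k h).2.1
      (hA k h).2.2.1 (hA k h).2.2.2.1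
  -- a point of V
  obtain ⟨z₀, hz₀o⟩ := obox_nonempty (l := fun m => (π₀j m : ℝ) / 2 ^ k₀')
    (u := fun m => ((π₀j m : ℝ) + 1) / 2 ^ k₀') (dyadic_lt k₀' π₀j)
  have hz₀A : z₀ ∈ interior (A k₀') := by
    refine interior_mono ?_ (obox_subset_interior_cbox _ _ hz₀o)
    rw [← dyadicCube_eq_cbox]
    exact (hA k₀' le_rfl).2.1
  have hz₀V : z₀ ∈ V := mem_iUnion.mpr ⟨k₀', mem_iUnion.mpr ⟨le_rfl, hz₀A⟩⟩
  have hz₀C : z₀ ∈ Cm := hVsub hz₀V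
  -- the closure step
  have hclo : ∀ y ∈ Cm, y ∈ closure V → y ∈ V := by
    intro y hy hyc
    obtain ⟨r, hr0, hball⟩ := Metric.isOpen_iff.mp hCo y hy
    obtain ⟨k₁, hk₁⟩ := exists_pow_lt_of_lt_one (x := r / (5 * n + 5)) (y := (1/2:ℝ))
      (by positivity) (by norm_num)
    set k₀ := max k₁ k₀' with hk₀def
    have hk₀' : k₀' ≤ k₀ := le_max_right _ _
    set δ := (1/2:ℝ) ^ k₀ with hδdef
    have hδ0 : 0 < δ := by positivity
    have hδr : (5 * (n:ℝ) + 5) * δ < r := by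
      have h1 : δ ≤ (1/2:ℝ) ^ k₁ :=
        pow_le_pow_of_le_one (by norm_num) (by norm_num) (le_max_left _ _)
      have h3 : (0:ℝ) < 5 * n + 5 := by positivity
      have h2 : (1/2:ℝ) ^ k₁ * (5 * n + 5) < r := by
        rw [lt_div_iff₀ h3] at hk₁; exact hk₁
      nlinarith
    obtain ⟨z, hzV, hdyz⟩ := Metric.mem_closure_iff.mp hyc δ hδ0
    have hd : dist z y < δ := by rw [dist_comm]; exact hdyz
    simp only [hV, mem_iUnion] at hzV
    obtain ⟨k₂, hk₂, hz⟩ := hzV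
    set K := max k₀ k₂ with hKdef
    have hKk₀' : k₀' ≤ K := hk₀'.trans (le_max_left _ _)
    have hAK := hA K hKk₀'
    have hzK : z ∈ interior (A K) := interior_mono (hAmono k₂ K hk₂ (le_max_right _ _)) hz
    set Q := ((2:ℝ) ^ K)⁻¹ with hQdef
    have hQ0 : 0 < Q := by positivity
    have hPQ : (2:ℝ) ^ K * Q = 1 := by rw [hQdef]; field_simp
    have hQδ : Q ≤ δ := by
      rw [hQdef, hδdef]
      have e : (1/2:ℝ) ^ k₀ = ((2:ℝ) ^ k₀)⁻¹ := by rw [one_div, inv_pow]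
      rw [e]
      exact inv_anti₀ (by positivity)
        (pow_le_pow_right₀ (by norm_num) (le_max_left _ _))
    have hdiv : ∀ c : ℝ, c / 2 ^ K = c * Q := fun c => by rw [hQdef, div_eq_mul_inv]
    set a : Fin n → ℤ := fun m => ⌊(2:ℝ) ^ K * z m⌋ with hadef
    set b : Fin n → ℤ := fun m => ⌊(2:ℝ) ^ K * y m⌋ with hbdef
    have hfloor : ∀ (w : EuclideanSpace ℝ (Fin n)) (m : Fin n),
        (⌊(2:ℝ) ^ K * w m⌋ : ℝ) * Q ≤ w m ∧ w m < ((⌊(2:ℝ) ^ K * w m⌋ : ℝ) + 1) * Q := by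
      intro w m
      constructor
      · calc (⌊(2:ℝ) ^ K * w m⌋ : ℝ) * Q ≤ ((2:ℝ) ^ K * w m) * Q :=
              mul_le_mul_of_nonneg_right (Int.floor_le _) hQ0.le
          _ = w m := by rw [mul_comm ((2:ℝ)^K) (w m), mul_assoc, hPQ, mul_one]
      · calc w m = ((2:ℝ) ^ K * w m) * Q := by
              rw [mul_comm ((2:ℝ)^K) (w m), mul_assoc, hPQ, mul_one]
          _ < ((⌊(2:ℝ) ^ K * w m⌋ : ℝ) + 1) * Q :=
              mul_lt_mul_of_pos_right (Int.lt_floor_add_one _) hQ0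
    have hfa : ∀ m, (a m : ℝ) * Q ≤ z m ∧ z m < ((a m : ℝ) + 1) * Q := fun m => hfloor z m
    have hfb : ∀ m, (b m : ℝ) * Q ≤ y m ∧ y m < ((b m : ℝ) + 1) * Q := fun m => hfloor y m
    set lo : Fin n → ℤ := fun m => min (a m) (b m) - 1 with hlodef
    set hi : Fin n → ℤ := fun m => max (a m) (b m) + 1 with hhidef
    have hlohi : ∀ m, lo m ≤ hi m := fun m => by
      simp only [hlodef, hhidef]; omega
    set Box := cbox (fun m => (lo m : ℝ) / 2 ^ K) (fun m => ((hi m : ℝ) + 1) / 2 ^ K)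
      with hBoxdef
    have hBoxDrawn : DrawnOn n K Box := ⟨_, (iUnion_cubes_box K lo hi hlohi).symm⟩
    have hLU : ∀ m, (lo m : ℝ) / 2 ^ K < ((hi m : ℝ) + 1) / 2 ^ K := by
      intro m
      have h2K : (0:ℝ) < 2 ^ K := by positivity
      rw [div_lt_div_iff₀ h2K h2K]
      have : (lo m : ℝ) ≤ (hi m : ℝ) := by exact_mod_cast hlohi m
      nlinarith
    have hINTz : ∀ m, lo m ≤ a m - 1 ∧ lo m ≤ b m - 1 ∧ a m + 1 ≤ hi m ∧
        b m + 1 ≤ hi m ∧ (a m - 1 ≤ lo m ∨ b m - 1 ≤ lo m) ∧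
        (hi m ≤ a m + 1 ∨ hi m ≤ b m + 1) := by
      intro m
      simp only [hlodef, hhidef]
      omega
    have hINT : ∀ m, ((lo m : ℝ) ≤ (a m : ℝ) - 1) ∧ ((lo m : ℝ) ≤ (b m : ℝ) - 1) ∧
        ((a m : ℝ) + 1 ≤ (hi m : ℝ)) ∧ ((b m : ℝ) + 1 ≤ (hi m : ℝ)) ∧
        (((a m : ℝ) - 1 ≤ (lo m : ℝ)) ∨ ((b m : ℝ) - 1 ≤ (lo m : ℝ))) ∧
        (((hi m : ℝ) ≤ (a m : ℝ) + 1) ∨ ((hi m : ℝ) ≤ (b m : ℝ) + 1)) := by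
      intro m
      obtain ⟨h1, h2, h3, h4, h5, h6⟩ := hINTz m
      refine ⟨by exact_mod_cast h1, by exact_mod_cast h2, by exact_mod_cast h3,
        by exact_mod_cast h4, ?_, ?_⟩
      · rcases h5 with h | h
        · exact Or.inl (by exact_mod_cast h)
        · exact Or.inr (by exact_mod_cast h)
      · rcases h6 with h | h
        · exact Or.inl (by exact_mod_cast h)
        · exact Or.inr (by exact_mod_cast h)
    have Ql : ∀ {u v : ℝ}, u ≤ v → u * Q ≤ v * Q := fun h =>
      mul_le_mul_of_nonneg_right h hQ0.le
    -- y and z are in the open box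
    have hyzo : ∀ w : EuclideanSpace ℝ (Fin n),
        (∀ m, ((a m : ℝ) * Q ≤ w m ∧ w m < ((a m : ℝ) + 1) * Q) ∨
              ((b m : ℝ) * Q ≤ w m ∧ w m < ((b m : ℝ) + 1) * Q)) →
        w ∈ obox (fun m => (lo m : ℝ) / 2 ^ K) (fun m => ((hi m : ℝ) + 1) / 2 ^ K) := by
      intro w hw m
      obtain ⟨c1, c2, c3, c4, _, _⟩ := hINT m
      have q1 := Ql c1
      have q2 := Ql c2
      have q3 := Ql c3
      have q4 := Ql c4
      dsimp only
      rw [hdiv, hdiv]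
      rcases hw m with ⟨h1, h2⟩ | ⟨h1, h2⟩
      · constructor
        · nlinarith [hQ0]
        · nlinarith [hQ0]
      · constructor
        · nlinarith [hQ0]
        · nlinarith [hQ0]
    have hyo : y ∈ obox _ _ := hyzo y fun m => Or.inr (hfb m)
    have hzo : z ∈ obox _ _ := hyzo z fun m => Or.inl (hfa m)
    -- Box is inside the ball
    have hBoxBall : Box ⊆ Metric.ball y r := by
      intro p hp
      have hcoord : ∀ m, dist (p m) (y m) ≤ 5 * δ := by
        intro m
        obtain ⟨hp1, hp2⟩ := hp m
        dsimp only at hp1 hp2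
        rw [hdiv] at hp1 hp2
        obtain ⟨ha1, ha2⟩ := hfa m
        obtain ⟨hb1, hb2⟩ := hfb m
        obtain ⟨c1, c2, c3, c4, c5, c6⟩ := hINT m
        have hzym : |z m - y m| < δ := by
          rw [← Real.dist_eq]
          exact lt_of_le_of_lt (coord_dist_le z y m) hd
        obtain ⟨hzy1, hzy2⟩ := abs_lt.mp hzym
        rw [Real.dist_eq, abs_le]
        constructor
        · -- -(5δ) ≤ p - y, i.e. y - p ≤ 5δ
          rcases c5 with h | h
          · have q := Ql h
            nlinarith [hQδ, hQ0]
          · have q := Ql h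
            nlinarith [hQδ, hQ0]
        · rcases c6 with h | h
          · have q := Ql h
            nlinarith [hQδ, hQ0]
          · have q := Ql h
            nlinarith [hQδ, hQ0]
      have hd5 : (0:ℝ) ≤ 5 * δ := by positivity
      have hdpy : dist p y ≤ n * (5 * δ) := dist_le_of_coord hd5 hcoord
      have h2 : (n:ℝ) * (5 * δ) < r := by nlinarith [hδr, hδ0]
      exact lt_of_le_of_lt hdpy h2
    -- build B
    set B := A K ∪ Box with hBdef
    have hBdrawn : DrawnOn n K B := hAK.1.union hBoxDrawn
    have hπB : dyadicCube n k₀' π₀j ⊆ B := hAK.2.1.trans subset_union_left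
    have hBC : B ⊆ Cm := union_subset hAK.2.2.1 (hBoxBall.trans hball)
    have hABsub : interior (A K) ⊆ interior B := interior_mono subset_union_left
    have hBoxBsub : interior Box ⊆ interior B := interior_mono subset_union_right
    have hzBox : z ∈ interior Box := obox_subset_interior_cbox _ _ hzo
    have hzB : z ∈ interior B := hABsub hzK
    set W := interior (A K) ∪ interior Box with hWdef
    have hWpre : IsPreconnected W :=
      IsPreconnected.union z hzK hzBox hAK.2.2.2.1.isPreconnected
        ((convex_cbox _ _).interior.isPreconnected)
    have hWsub : W ⊆ interior B := union_subset hABsub hBoxBsub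
    have hzW : z ∈ W := Or.inl hzK
    have hpre : IsPreconnected (interior B) := by
      apply isPreconnected_of_forall z
      intro p hp
      obtain ⟨ε, hε0, hεball⟩ := Metric.isOpen_iff.mp isOpen_interior p hp
      have hpB : p ∈ B := interior_subset hp
      have hq : ∃ q, q ∈ Metric.ball p ε ∩ W := by
        rcases hpB with hpA | hpBox
        · obtain ⟨𝒬A, hQA⟩ := hAK.1
          have hpu : p ∈ ⋃ j ∈ 𝒬A, dyadicCube n K j := hQA ▸ hpA
          simp only [mem_iUnion, exists_prop] at hpu
          obtain ⟨j, hj, hpj⟩ := hpu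
          have hpcl : p ∈ closure (interior (dyadicCube n K j)) := by
            rw [dyadicCube_eq_cbox]
            rw [dyadicCube_eq_cbox] at hpj
            exact cbox_subset_closure_interior (dyadic_lt K j) hpj
          obtain ⟨q, hq1, hq2⟩ := Metric.mem_closure_iff.mp hpcl ε hε0
          refine ⟨q, Metric.mem_ball.mpr (by rw [dist_comm]; exact hq2), Or.inl ?_⟩
          refine interior_mono ?_ hq1
          intro w hw
          rw [hQA]
          exact mem_biUnion hj hw
        · have hpcl : p ∈ closure (interior Box) :=
            cbox_subset_closure_interior hLU hpBox
          obtain ⟨q, hq1, hq2⟩ := Metric.mem_closure_iff.mp hpcl ε hε0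
          exact ⟨q, Metric.mem_ball.mpr (by rw [dist_comm]; exact hq2), Or.inr hq1⟩
      obtain ⟨q, hqball, hqW⟩ := hq
      refine ⟨Metric.ball p ε ∪ W, union_subset hεball hWsub, Or.inr hzW,
        Or.inl (Metric.mem_ball_self hε0), ?_⟩
      exact IsPreconnected.union q hqball hqW (convex_ball p ε).isPreconnected hWpre
    have hBconn : IsConnected (interior B) := ⟨⟨z, hzB⟩, hpre⟩
    have hBsubA : B ⊆ A K := hAK.2.2.2.2 B hBdrawn hπB hBC hBconn
    have hyInt : y ∈ interior (A K) := by
      have hyBox : y ∈ interior Box := obox_subset_interior_cbox _ _ hyo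
      exact interior_mono hBsubA (hBoxBsub hyBox)
    exact mem_iUnion.mpr ⟨K, mem_iUnion.mpr ⟨hKk₀', hyInt⟩⟩
  -- conclude by connectedness
  intro y hy
  by_contra hyV
  have hyc : y ∉ closure V := fun hc => hyV (hclo y hy hc)
  obtain ⟨w, hw⟩ := hCc.isPreconnected V (closure V)ᶜ hVopen isClosed_closure.isOpen_compl
    (fun q hq => by
      by_cases h : q ∈ closure V
      · exact Or.inl (hclo q hq h)
      · exact Or.inr h)
    ⟨z₀, hz₀C, hz₀V⟩ ⟨y, hy, hyc⟩
  exact hw.2.2 (subset_closure hw.2.1)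

end Aux


/-- The dyadic approximations of an arbitrary open set `Ω`, rooted in a fixed
family of cubes (one per connected component), form a non-decreasing sequence of open subsets
of `Ω` whose union is `Ω`; in particular the characteristic functions converge pointwise. -/
theorem stmt0 {n : ℕ} {M : Type*} (Ω : Set (EuclideanSpace ℝ (Fin n))) (hΩ : IsOpen Ω)
    (C : M → Set (EuclideanSpace ℝ (Fin n)))
    (hcomp : ∀ m, ∃ x ∈ Ω, C m = connectedComponentIn Ω x)
    (hcover : ∀ x ∈ Ω, ∃ m, x ∈ C m)
    (km : M → ℕ) (π : M → Fin n → ℤ)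
    (hroot : ∀ m, dyadicCube n (km m) (π m) ⊆ C m)
    (A : M → ℕ → Set (EuclideanSpace ℝ (Fin n)))
    (hA : ∀ m k, km m ≤ k →
      IsMaxDyadicApprox n k (dyadicCube n (km m) (π m)) (C m) (A m k))
    (Ωsq : ℕ → Set (EuclideanSpace ℝ (Fin n)))
    (hΩsq : ∀ k, Ωsq k = interior (⋃ m, ⋃ (_ : km m ≤ k), A m k)) :
    Monotone Ωsq ∧ (∀ k, IsOpen (Ωsq k) ∧ Ωsq k ⊆ Ω) ∧ (⋃ k, Ωsq k) = Ω ∧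
      ∀ x, Tendsto (fun k => (Ωsq k).indicator (fun _ => (1 : ℝ)) x) atTop
        (nhds (Ω.indicator (fun _ => (1 : ℝ)) x)) := by
  have hCopen : ∀ m, IsOpen (C m) := by
    intro m; obtain ⟨x, hx, hc⟩ := hcomp m; rw [hc]; exact hΩ.connectedComponentIn
  have hCconn : ∀ m, IsConnected (C m) := by
    intro m; obtain ⟨x, hx, hc⟩ := hcomp m; rw [hc]
    exact isConnected_connectedComponentIn_iff.mpr hx
  have hCsub : ∀ m, C m ⊆ Ω := by
    intro m; obtain ⟨x, hx, hc⟩ := hcomp m; rw [hc]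
    exact connectedComponentIn_subset _ _
  have hAmono : ∀ m k k', km m ≤ k → k ≤ k' → A m k ⊆ A m k' := fun m k k' h hk =>
    (hA m k' (h.trans hk)).2.2.2.2 _ (DrawnOn.mono hk (hA m k h).1) (hA m k h).2.1
      (hA m k h).2.2.1 (hA m k h).2.2.2.1
  have hmono : Monotone Ωsq := by
    apply monotone_nat_of_le_succ
    intro k
    rw [hΩsq k, hΩsq (k+1)]
    apply interior_mono
    refine iUnion_mono fun m => ?_
    refine iUnion_subset fun h => ?_
    exact (hAmono m k (k+1) h (Nat.le_succ k)).trans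
      (subset_iUnion (fun _ : km m ≤ k + 1 => A m (k+1)) (h.trans (Nat.le_succ k)))
  have hopensub : ∀ k, IsOpen (Ωsq k) ∧ Ωsq k ⊆ Ω := by
    intro k
    rw [hΩsq k]
    refine ⟨isOpen_interior, interior_subset.trans ?_⟩
    exact iUnion_subset fun m => iUnion_subset fun h => ((hA m k h).2.2.1).trans (hCsub m)
  have hunion : (⋃ k, Ωsq k) = Ω := by
    apply subset_antisymm
    · exact iUnion_subset fun k => (hopensub k).2
    · intro x hx
      obtain ⟨m, hm⟩ := hcover x hx
      have hkey := component_exhaustion (C m) (hCopen m) (hCconn m) (km m) (π m) (A m)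
        (fun k hk => hA m k hk) hm
      simp only [mem_iUnion] at hkey
      obtain ⟨k, hk, hxk⟩ := hkey
      refine mem_iUnion.mpr ⟨k, ?_⟩
      rw [hΩsq k]
      refine interior_mono ?_ hxk
      exact fun w hw => mem_iUnion.mpr ⟨m, mem_iUnion.mpr ⟨hk, hw⟩⟩
  refine ⟨hmono, hopensub, hunion, ?_⟩
  intro x
  by_cases hx : x ∈ Ω
  · have hx' : x ∈ ⋃ k, Ωsq k := hunion ▸ hx
    obtain ⟨k₀, hk₀⟩ := mem_iUnion.mp hx'
    rw [indicator_of_mem hx]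
    apply tendsto_atTop_of_eventually_const (i₀ := k₀)
    intro k hk
    exact indicator_of_mem (hmono hk hk₀) _
  · rw [indicator_of_notMem hx]
    have hz : ∀ k, (Ωsq k).indicator (fun _ => (1:ℝ)) x = 0 := fun k =>
      indicator_of_notMem (fun h => hx ((hopensub k).2 h)) _
    have he : (fun k => (Ωsq k).indicator (fun _ => (1:ℝ)) x) = fun _ => (0:ℝ) := funext hz
    rw [he]
    exact tendsto_const_nhds

end
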